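/- Let $\gamma>1$. Then there exists a constant $C>0$ such that for all $\rho\ge 0$: $\big|\sqrt{2h(\rho)}-|\rho-1|\big|\le C\,(\rho-1)^2\,\big(1+\rho^{(\gamma-3)^+}\big)$, where $(\gamma-3)^+=\max\{\gamma-3,0\}$. (Note $h(\rho)\ge 0$ for all $\rho\ge 0$, so the square root is defined.) -/

import Mathlib

noncomputable section

/-- Internal energy `h(ρ) = (ρ^γ - 1 - γ(ρ-1)) / (γ(γ-1))` (real powers). -/
def hfun (γ ρ : ℝ) : ℝ := (ρ ^ γ - 1 - γ * (ρ - 1)) / (γ * (γ - 1))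

open Real Set

/-- uniform bound on `x ^ q` for `x ∈ [1/2, 3/2]`. -/
private lemma rpow_bound_on (q : ℝ) {x : ℝ} (hx : x ∈ Set.Icc (1/2:ℝ) (3/2)) :
    x ^ q ≤ 2 ^ |q| := by
  obtain ⟨h1, h2⟩ := hx
  have hx0 : (0:ℝ) < x := by linarith
  rcases le_or_gt 0 q with hq | hq
  · rw [abs_of_nonneg hq]
    exact Real.rpow_le_rpow hx0.le (by linarith) hq
  · rw [abs_of_neg hq]
    calc x ^ q ≤ (1/2:ℝ) ^ q := Real.rpow_le_rpow_of_nonpos (by norm_num) h1 hq.le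
      _ = 2 ^ (-q) := by
          rw [show (1/2:ℝ) = 2⁻¹ by norm_num, Real.inv_rpow (by norm_num),
            ← Real.rpow_neg (by norm_num)]

/-- second order Taylor bound for `ρ ^ γ` near `ρ = 1`. -/
private lemma taylor3 (γ : ℝ) (hγ : 1 < γ) {ρ : ℝ} (hρ : ρ ∈ Set.Icc (1/2:ℝ) (3/2)) :
    |ρ ^ γ - 1 - γ * (ρ - 1) - γ * (γ - 1) / 2 * (ρ - 1) ^ 2| ≤
      γ * (γ - 1) * (|γ - 2| * 2 ^ |γ - 3|) * |ρ - 1| ^ 3 := by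
  set L : ℝ := |γ - 2| * 2 ^ |γ - 3| with hL
  have hL0 : 0 ≤ L := mul_nonneg (abs_nonneg _) (Real.rpow_nonneg (by norm_num) _)
  set s : Set ℝ := Set.uIcc ρ 1 with hs
  have hone : (1:ℝ) ∈ Set.Icc (1/2:ℝ) (3/2) := by norm_num
  have hsub : s ⊆ Set.Icc (1/2:ℝ) (3/2) := by
    rw [hs]
    intro x hx
    rcases le_total ρ 1 with h | h
    · rw [Set.uIcc_of_le h] at hx
      exact ⟨le_trans hρ.1 hx.1, le_trans hx.2 hone.2⟩
    · rw [Set.uIcc_of_ge h] at hx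
      exact ⟨le_trans hone.1 hx.1, le_trans hx.2 hρ.2⟩
  have hpos : ∀ x ∈ s, (0:ℝ) < x := fun x hx => by
    have := (hsub hx).1; linarith
  have habs : ∀ x ∈ s, |x - 1| ≤ |ρ - 1| := by
    intro x hx
    rw [hs] at hx
    rcases le_total ρ 1 with h | h
    · rw [Set.uIcc_of_le h] at hx
      rw [abs_of_nonpos (by linarith [hx.2]), abs_of_nonpos (by linarith)]
      linarith [hx.1]
    · rw [Set.uIcc_of_ge h] at hx
      rw [abs_of_nonneg (by linarith [hx.1]), abs_of_nonneg (by linarith)]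
      linarith [hx.2]
  have hconv : Convex ℝ s := convex_uIcc ρ 1
  have h1s : (1:ℝ) ∈ s := Set.right_mem_uIcc
  have hρs : ρ ∈ s := Set.left_mem_uIcc
  -- Step A : |x^(γ-2) - 1| ≤ L * |ρ - 1| on s
  have stepA : ∀ x ∈ s, |x ^ (γ - 2) - 1| ≤ L * |ρ - 1| := by
    intro x hx
    have hderiv : ∀ y ∈ s, HasDerivWithinAt (fun t : ℝ => t ^ (γ - 2))
        ((γ - 2) * y ^ (γ - 2 - 1)) s y := fun y hy =>
      (Real.hasDerivAt_rpow_const (Or.inl (hpos y hy).ne')).hasDerivWithinAt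
    have hbound : ∀ y ∈ s, ‖(γ - 2) * y ^ (γ - 2 - 1)‖ ≤ L := by
      intro y hy
      rw [Real.norm_eq_abs, abs_mul, hL]
      have he : γ - 2 - 1 = γ - 3 := by ring
      rw [he, abs_of_nonneg (Real.rpow_nonneg (hpos y hy).le _)]
      exact mul_le_mul_of_nonneg_left (rpow_bound_on _ (hsub hy)) (abs_nonneg _)
    have := Convex.norm_image_sub_le_of_norm_hasDerivWithin_le hderiv hbound hconv h1s hx
    rw [Real.norm_eq_abs, Real.norm_eq_abs, Real.one_rpow] at this
    calc |x ^ (γ - 2) - 1| ≤ L * |x - 1| := this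
      _ ≤ L * |ρ - 1| := mul_le_mul_of_nonneg_left (habs x hx) hL0
  -- Step B : |F'(x)| ≤ γ(γ-1)L|ρ-1| * |x-1| on s, where F' x = γ(x^(γ-1) - 1 - (γ-1)(x-1))
  have stepB : ∀ x ∈ s, |γ * (x ^ (γ - 1) - 1 - (γ - 1) * (x - 1))| ≤
      γ * (γ - 1) * L * |ρ - 1| * |ρ - 1| := by
    intro x hx
    have hderiv : ∀ y ∈ s, HasDerivWithinAt
        (fun t : ℝ => γ * (t ^ (γ - 1) - 1 - (γ - 1) * (t - 1)))
        (γ * (γ - 1) * (y ^ (γ - 2) - 1)) s y := by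
      intro y hy
      have h1 : HasDerivAt (fun t : ℝ => t ^ (γ - 1)) ((γ - 1) * y ^ (γ - 1 - 1)) y :=
        Real.hasDerivAt_rpow_const (Or.inl (hpos y hy).ne')
      have h2 : HasDerivAt (fun t : ℝ => (γ - 1) * (t - 1)) (γ - 1) y := by
        simpa using ((hasDerivAt_id y).sub_const 1).const_mul (γ - 1)
      have := (((h1.sub_const 1).sub h2).const_mul γ)
      refine this.hasDerivWithinAt.congr_deriv ?_
      have he : γ - 1 - 1 = γ - 2 := by ring
      rw [he]; ring
    have hbound : ∀ y ∈ s, ‖γ * (γ - 1) * (y ^ (γ - 2) - 1)‖ ≤ γ * (γ - 1) * (L * |ρ - 1|) := by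
      intro y hy
      rw [Real.norm_eq_abs, abs_mul, abs_of_nonneg (by nlinarith : (0:ℝ) ≤ γ * (γ - 1))]
      exact mul_le_mul_of_nonneg_left (stepA y hy) (by nlinarith)
    have := Convex.norm_image_sub_le_of_norm_hasDerivWithin_le hderiv hbound hconv h1s hx
    rw [Real.norm_eq_abs, Real.norm_eq_abs, Real.one_rpow] at this
    simp only [sub_self, mul_zero, sub_zero, mul_one] at this
    have h0 : γ * (1 - 1 - (γ - 1) * (1 - 1)) = 0 := by ring
    calc |γ * (x ^ (γ - 1) - 1 - (γ - 1) * (x - 1))|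
        = |γ * (x ^ (γ - 1) - 1 - (γ - 1) * (x - 1)) - γ * ((1:ℝ) - 1 - (γ - 1) * (1 - 1))| := by
          rw [h0, sub_zero]
      _ ≤ γ * (γ - 1) * (L * |ρ - 1|) * |x - 1| := by
          simpa using this
      _ ≤ γ * (γ - 1) * L * |ρ - 1| * |ρ - 1| := by
          have := habs x hx
          have h1 : (0:ℝ) ≤ γ * (γ - 1) * (L * |ρ - 1|) := mul_nonneg (by nlinarith) (by positivity)
          calc γ * (γ - 1) * (L * |ρ - 1|) * |x - 1|
              ≤ γ * (γ - 1) * (L * |ρ - 1|) * |ρ - 1| := mul_le_mul_of_nonneg_left this h1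
            _ = γ * (γ - 1) * L * |ρ - 1| * |ρ - 1| := by ring
  -- Step C : final bound via MVT on F
  have hderiv : ∀ y ∈ s, HasDerivWithinAt
      (fun t : ℝ => t ^ γ - 1 - γ * (t - 1) - γ * (γ - 1) / 2 * (t - 1) ^ 2)
      (γ * (y ^ (γ - 1) - 1 - (γ - 1) * (y - 1))) s y := by
    intro y hy
    have h1 : HasDerivAt (fun t : ℝ => t ^ γ) (γ * y ^ (γ - 1)) y :=
      Real.hasDerivAt_rpow_const (Or.inl (hpos y hy).ne')
    have h2 : HasDerivAt (fun t : ℝ => γ * (t - 1)) γ y := by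
      simpa using ((hasDerivAt_id y).sub_const 1).const_mul γ
    have h3 : HasDerivAt (fun t : ℝ => γ * (γ - 1) / 2 * (t - 1) ^ 2)
        (γ * (γ - 1) / 2 * (2 * (y - 1))) y := by
      have := (((hasDerivAt_id y).sub_const 1).pow 2).const_mul (γ * (γ - 1) / 2)
      simpa using this
    have := ((h1.sub_const 1).sub h2).sub h3
    refine this.hasDerivWithinAt.congr_deriv ?_
    ring
  have hbound : ∀ y ∈ s, ‖γ * (y ^ (γ - 1) - 1 - (γ - 1) * (y - 1))‖ ≤
      γ * (γ - 1) * L * |ρ - 1| * |ρ - 1| := by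
    intro y hy
    rw [Real.norm_eq_abs]
    exact stepB y hy
  have hmvt := Convex.norm_image_sub_le_of_norm_hasDerivWithin_le hderiv hbound hconv h1s hρs
  rw [Real.norm_eq_abs, Real.norm_eq_abs, Real.one_rpow] at hmvt
  have h0 : (1:ℝ) - 1 - γ * (1 - 1) - γ * (γ - 1) / 2 * ((1:ℝ) - 1) ^ 2 = 0 := by ring
  calc |ρ ^ γ - 1 - γ * (ρ - 1) - γ * (γ - 1) / 2 * (ρ - 1) ^ 2|
      ≤ γ * (γ - 1) * L * |ρ - 1| * |ρ - 1| * |ρ - 1| := by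
        have := hmvt
        rw [h0, sub_zero] at this
        exact this
    _ = γ * (γ - 1) * L * |ρ - 1| ^ 3 := by ring

set_option maxHeartbeats 1600000 in
/-- For `γ > 1` there is `C > 0` with
`|√(2h(ρ)) - |ρ-1|| ≤ C (ρ-1)² (1 + ρ^((γ-3)⁺))` for all `ρ ≥ 0`. -/
theorem stmt_11 (γ : ℝ) (hγ : 1 < γ) :
    ∃ C > 0, ∀ ρ : ℝ, 0 ≤ ρ →
      abs (Real.sqrt (2 * hfun γ ρ) - |ρ - 1|) ≤
        C * (ρ - 1) ^ 2 * (1 + ρ ^ max (γ - 3) 0) := by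
  have hγ0 : (0:ℝ) < γ := by linarith
  have hγγ : (0:ℝ) < γ * (γ - 1) := by nlinarith
  set L : ℝ := |γ - 2| * 2 ^ |γ - 3| with hLdef
  have hL0 : 0 ≤ L := mul_nonneg (abs_nonneg _) (Real.rpow_nonneg (by norm_num) _)
  set M₁ : ℝ := Real.sqrt (2 / (γ - 1)) with hM₁
  set M₂ : ℝ := Real.sqrt (2 / (γ * (γ - 1))) with hM₂
  have hM₁0 : 0 ≤ M₁ := Real.sqrt_nonneg _
  have hM₂0 : 0 ≤ M₂ := Real.sqrt_nonneg _
  set κ : ℝ := max (γ - 3) 0 with hκ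
  set C : ℝ := 2 * L + 4 * (M₁ + 1) + 9 * M₂ + 3 with hC
  refine ⟨C, by positivity, ?_⟩
  intro ρ hρ0
  have hκρ : 0 ≤ ρ ^ κ := Real.rpow_nonneg hρ0 _
  -- nonnegativity of hfun
  have hbern : 1 + γ * (ρ - 1) ≤ ρ ^ γ := by
    have := one_add_mul_self_le_rpow_one_add (s := ρ - 1) (by linarith) hγ.le
    simpa using this
  have hh0 : 0 ≤ hfun γ ρ := by
    apply div_nonneg _ hγγ.le
    linarith
  have ha0 : 0 ≤ 2 * hfun γ ρ := by linarith
  by_cases hnear : |ρ - 1| ≤ 1/2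
  · -- near region : ρ ∈ [1/2, 3/2]
    rw [abs_le] at hnear
    have hρI : ρ ∈ Set.Icc (1/2:ℝ) (3/2) := ⟨by linarith [hnear.1], by linarith [hnear.2]⟩
    have htay := taylor3 γ hγ hρI
    -- |2h - (ρ-1)²| ≤ 2L|ρ-1|³
    have hkey : |2 * hfun γ ρ - (ρ - 1) ^ 2| ≤ 2 * L * |ρ - 1| ^ 3 := by
      have heq : 2 * hfun γ ρ - (ρ - 1) ^ 2 =
          2 * (ρ ^ γ - 1 - γ * (ρ - 1) - γ * (γ - 1) / 2 * (ρ - 1) ^ 2) / (γ * (γ - 1)) := by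
        rw [hfun]
        have hγ1ne' : γ - 1 ≠ 0 := by linarith
        field_simp
      rw [heq, abs_div, abs_of_pos hγγ, div_le_iff₀ hγγ, abs_mul, abs_of_nonneg (by norm_num : (0:ℝ) ≤ 2)]
      calc 2 * |ρ ^ γ - 1 - γ * (ρ - 1) - γ * (γ - 1) / 2 * (ρ - 1) ^ 2|
          ≤ 2 * (γ * (γ - 1) * L * |ρ - 1| ^ 3) := by
            have : γ * (γ - 1) * (|γ - 2| * 2 ^ |γ - 3|) * |ρ - 1| ^ 3
                = γ * (γ - 1) * L * |ρ - 1| ^ 3 := by rw [hLdef]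
            linarith [htay]
        _ = 2 * L * |ρ - 1| ^ 3 * (γ * (γ - 1)) := by ring
    rcases eq_or_ne ρ 1 with rfl | hρ1
    · simp [hfun, Real.one_rpow]
    · have hb : 0 < |ρ - 1| := abs_pos.2 (sub_ne_zero.2 hρ1)
      set a : ℝ := 2 * hfun γ ρ with hadef
      set b : ℝ := |ρ - 1| with hbdef
      have hsq : Real.sqrt a ^ 2 = a := Real.sq_sqrt ha0
      have hprod : |Real.sqrt a - b| * (Real.sqrt a + b) = |a - b ^ 2| := by
        rw [← abs_of_nonneg (by positivity : (0:ℝ) ≤ Real.sqrt a + b), ← abs_mul]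
        congr 1
        nlinarith [hsq]
      have hstep : |Real.sqrt a - b| * b ≤ |a - b ^ 2| := by
        rw [← hprod]
        apply mul_le_mul_of_nonneg_left _ (abs_nonneg _)
        have := Real.sqrt_nonneg a
        linarith
      have hb2 : b ^ 2 = (ρ - 1) ^ 2 := by rw [hbdef, sq_abs]
      have hfinal : |Real.sqrt a - b| * b ≤ 2 * L * (ρ - 1) ^ 2 * b := by
        calc |Real.sqrt a - b| * b ≤ |a - b ^ 2| := hstep
          _ ≤ 2 * L * |ρ - 1| ^ 3 := by rw [hb2]; exact hkey
          _ = 2 * L * (ρ - 1) ^ 2 * b := by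
              rw [hbdef, show |ρ - 1| ^ 3 = |ρ - 1| ^ 2 * |ρ - 1| by ring, sq_abs]
              ring
      have h1 : |Real.sqrt a - b| ≤ 2 * L * (ρ - 1) ^ 2 :=
        le_of_mul_le_mul_right hfinal hb
      have hCge : 2 * L ≤ C := by rw [hC]; linarith
      have hC0 : (0:ℝ) ≤ C := by linarith
      calc |Real.sqrt a - b| ≤ 2 * L * (ρ - 1) ^ 2 := h1
        _ ≤ C * (ρ - 1) ^ 2 := mul_le_mul_of_nonneg_right hCge (sq_nonneg _)
        _ ≤ C * (ρ - 1) ^ 2 * (1 + ρ ^ κ) :=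
            le_mul_of_one_le_right (mul_nonneg hC0 (sq_nonneg _)) (by linarith)
  · -- far region : |ρ - 1| > 1/2
    push_neg at hnear
    have htri : abs (Real.sqrt (2 * hfun γ ρ) - |ρ - 1|) ≤
        Real.sqrt (2 * hfun γ ρ) + |ρ - 1| := by
      have h1 := Real.sqrt_nonneg (2 * hfun γ ρ)
      have h2 := abs_nonneg (ρ - 1)
      rw [abs_sub_le_iff]
      constructor <;> linarith
    rcases lt_or_ge ρ 1 with hcase | hcase
    · -- ρ < 1/2
      have hρhalf : ρ < 1/2 := by
        rw [abs_of_nonpos (by linarith)] at hnear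
        linarith
      have hγne : γ ≠ 0 := by linarith
      have hγ1ne : γ - 1 ≠ 0 := by linarith
      have hsqle : Real.sqrt (2 * hfun γ ρ) ≤ M₁ := by
        rw [hM₁]
        apply Real.sqrt_le_sqrt
        have hle1 : ρ ^ γ ≤ 1 := Real.rpow_le_one hρ0 (by linarith) hγ0.le
        have hnum : ρ ^ γ - 1 - γ * (ρ - 1) ≤ γ := by nlinarith
        have hd : hfun γ ρ ≤ γ / (γ * (γ - 1)) := by
          rw [hfun]; exact (div_le_div_iff_of_pos_right hγγ).2 hnum
        have he : (2:ℝ) / (γ - 1) = 2 * (γ / (γ * (γ - 1))) := by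
          field_simp
        rw [he]; linarith
      have habs1 : |ρ - 1| ≤ 1 := by
        rw [abs_of_nonpos (by linarith)]; linarith
      have hq : (1:ℝ)/4 ≤ (ρ - 1) ^ 2 := by nlinarith
      calc abs (Real.sqrt (2 * hfun γ ρ) - |ρ - 1|) ≤ Real.sqrt (2 * hfun γ ρ) + |ρ - 1| := htri
        _ ≤ M₁ + 1 := by linarith
        _ ≤ 4 * (M₁ + 1) * (ρ - 1) ^ 2 := by
            nlinarith [mul_nonneg (by linarith : (0:ℝ) ≤ M₁ + 1)
              (by linarith : (0:ℝ) ≤ (ρ - 1) ^ 2 - 1/4)]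
        _ ≤ C * (ρ - 1) ^ 2 * (1 + ρ ^ κ) := by
            have hCge : 4 * (M₁ + 1) ≤ C := by rw [hC]; linarith
            have hC0 : (0:ℝ) ≤ C := by linarith
            calc 4 * (M₁ + 1) * (ρ - 1) ^ 2 ≤ C * (ρ - 1) ^ 2 :=
                mul_le_mul_of_nonneg_right hCge (sq_nonneg _)
              _ ≤ C * (ρ - 1) ^ 2 * (1 + ρ ^ κ) :=
                le_mul_of_one_le_right (mul_nonneg hC0 (sq_nonneg _)) (by linarith)
    · -- ρ ≥ 3/2
      have hρ32 : (3:ℝ)/2 ≤ ρ := by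
        rw [abs_of_nonneg (by linarith)] at hnear
        linarith
      have hρ1 : (1:ℝ) ≤ ρ := by linarith
      have hρpos : (0:ℝ) < ρ := by linarith
      -- √(2h) ≤ M₂ * ρ^(γ/2)
      have h2h : 2 * hfun γ ρ ≤ 2 / (γ * (γ - 1)) * ρ ^ γ := by
        have hnum : ρ ^ γ - 1 - γ * (ρ - 1) ≤ ρ ^ γ := by nlinarith
        have hd : hfun γ ρ ≤ ρ ^ γ / (γ * (γ - 1)) := by
          rw [hfun]; exact (div_le_div_iff_of_pos_right hγγ).2 hnum
        have he : 2 / (γ * (γ - 1)) * ρ ^ γ = 2 * (ρ ^ γ / (γ * (γ - 1))) := by ring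
        rw [he]; linarith
      have hsqle : Real.sqrt (2 * hfun γ ρ) ≤ M₂ * ρ ^ (γ / 2) := by
        calc Real.sqrt (2 * hfun γ ρ) ≤ Real.sqrt (2 / (γ * (γ - 1)) * ρ ^ γ) :=
              Real.sqrt_le_sqrt h2h
          _ = M₂ * Real.sqrt (ρ ^ γ) := Real.sqrt_mul (by positivity) _
          _ = M₂ * ρ ^ (γ / 2) := by
              rw [show γ / 2 = γ * (1/2) by ring, Real.rpow_mul hρ0,
                ← Real.sqrt_eq_rpow]
      have hexp : γ / 2 ≤ 2 + κ := by
        rw [hκ]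
        rcases le_total (γ - 3) 0 with h | h
        · rw [max_eq_right h]; linarith
        · rw [max_eq_left h]; linarith
      have hmono : ρ ^ (γ / 2) ≤ ρ ^ (2 + κ) :=
        Real.rpow_le_rpow_of_exponent_le hρ1 hexp
      have hsplit : ρ ^ (2 + κ) = ρ ^ 2 * ρ ^ κ := by
        rw [Real.rpow_add hρpos, show (2:ℝ) = ((2:ℕ):ℝ) by norm_num, Real.rpow_natCast]
      have hρsq : ρ ^ 2 ≤ 9 * (ρ - 1) ^ 2 := by nlinarith
      have hbound2 : ρ ^ (2 + κ) ≤ 9 * (ρ - 1) ^ 2 * (1 + ρ ^ κ) := by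
        rw [hsplit]
        nlinarith [hκρ, sq_nonneg (ρ - 1), sq_nonneg ρ]
      have habsle : |ρ - 1| ≤ 2 * (ρ - 1) ^ 2 := by
        rw [abs_of_nonneg (by linarith)]
        nlinarith
      calc abs (Real.sqrt (2 * hfun γ ρ) - |ρ - 1|) ≤ Real.sqrt (2 * hfun γ ρ) + |ρ - 1| := htri
        _ ≤ M₂ * ρ ^ (2 + κ) + 2 * (ρ - 1) ^ 2 := by
            have := mul_le_mul_of_nonneg_left hmono hM₂0
            linarith [hsqle]
        _ ≤ M₂ * (9 * (ρ - 1) ^ 2 * (1 + ρ ^ κ)) + 2 * (ρ - 1) ^ 2 * (1 + ρ ^ κ) := by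
            have h1 := mul_le_mul_of_nonneg_left hbound2 hM₂0
            have h2 : 2 * (ρ - 1) ^ 2 ≤ 2 * (ρ - 1) ^ 2 * (1 + ρ ^ κ) :=
              le_mul_of_one_le_right (by positivity) (by linarith)
            linarith
        _ = (9 * M₂ + 2) * ((ρ - 1) ^ 2 * (1 + ρ ^ κ)) := by ring
        _ ≤ C * ((ρ - 1) ^ 2 * (1 + ρ ^ κ)) := by
            have hCge : 9 * M₂ + 2 ≤ C := by rw [hC]; linarith
            exact mul_le_mul_of_nonneg_right hCge
              (mul_nonneg (sq_nonneg _) (by linarith))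
        _ = C * (ρ - 1) ^ 2 * (1 + ρ ^ κ) := by ring
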